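/- Characterization of latent propensity scores (univariate version). Let Z : Ω → ℝ be measurable, X : Ω → {0,1} measurable, x ∈ {0,1}, and let m : ℝ → ℝ be Borel measurable with P(m(Z) ≥ δ) = 1 for some δ > 0. Then the following are equivalent: (1) m∘Z is a version of the conditional expectation E[1{X=x} ∣ σ(Z)]; (2) for all y ∈ ℝ, E[1{Z ≤ y}·1{X=x} / m(Z)] = P(Z ≤ y). -/

import Mathlib

open MeasureTheory ProbabilityTheory Set Filter Function Topology

noncomputable section

theorem latent_propensity_aux
    {Ω : Type*} [mΩ : MeasurableSpace Ω] (P : Measure Ω) [IsProbabilityMeasure P]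
    (Z : Ω → ℝ) (X : Ω → Bool) (hZ : Measurable Z) (hX : Measurable X)
    (x : Bool) (m : ℝ → ℝ) (hm : Measurable m)
    (δ : ℝ) (hδ : 0 < δ) (hmδ : P {ω | δ ≤ m (Z ω)} = 1)
    (G : MeasurableSpace Ω) (hGeq : G = MeasurableSpace.comap Z inferInstance) :
    ((fun ω => m (Z ω)) =ᵐ[P]
      P[(fun ω => if X ω = x then (1:ℝ) else 0) | G])
    ↔
    (∀ y : ℝ,
      (∫ ω, (if Z ω ≤ y ∧ X ω = x then (1:ℝ) else 0) / m (Z ω) ∂P)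
        = (P {ω | Z ω ≤ y}).toReal) := by
  classical
  letI : MeasurableSpace Ω := mΩ
  have hGle : G ≤ mΩ := by rw [hGeq]; exact hZ.comap_le
  have hZG : Measurable[G] Z := by
    rw [hGeq]; exact Measurable.of_comap_le le_rfl
  haveI : SigmaFinite (P.trim hGle) := inferInstance
  have hmZ : Measurable[mΩ] (fun ω => m (Z ω)) := hm.comp hZ
  have hmZG : Measurable[G] (fun ω => m (Z ω)) := hm.comp hZG
  have hae : ∀ᵐ ω ∂P, δ ≤ m (Z ω) := by
    have hms : MeasurableSet[mΩ] {ω | δ ≤ m (Z ω)} := hmZ measurableSet_Ici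
    rw [ae_iff]
    have he : {ω | ¬ δ ≤ m (Z ω)} = {ω | δ ≤ m (Z ω)}ᶜ := rfl
    rw [he]
    exact (prob_compl_eq_zero_iff hms).mpr hmδ
  set f : Ω → ℝ := fun ω => if X ω = x then 1 else 0 with hfdef
  have hf_meas : Measurable[mΩ] f := by
    have hfi : f = (X ⁻¹' {x}).indicator (fun _ => (1:ℝ)) := by
      funext ω; simp [hfdef, Set.indicator_apply]
    rw [hfi]; exact measurable_const.indicator (hX (measurableSet_singleton x))
  have hf_norm : ∀ ω, ‖f ω‖ ≤ 1 := by
    intro ω; by_cases h : X ω = x <;> simp [hfdef, h]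
  have hf_int : Integrable f P := by
    refine Integrable.mono' (integrable_const 1) hf_meas.aestronglyMeasurable ?_
    filter_upwards with ω; exact hf_norm ω
  set g : Ω → ℝ := fun ω => f ω / m (Z ω) with hgdef
  have hg_meas : Measurable[mΩ] g := hf_meas.div hmZ
  have hg_bound : ∀ᵐ ω ∂P, ‖g ω‖ ≤ 1/δ := by
    filter_upwards [hae] with ω hω
    have hmpos : 0 < m (Z ω) := lt_of_lt_of_le hδ hω
    have h0 : 0 ≤ f ω := by by_cases h : X ω = x <;> simp [hfdef, h]
    have h1 : f ω ≤ 1 := by by_cases h : X ω = x <;> simp [hfdef, h]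
    rw [Real.norm_eq_abs, abs_of_nonneg (div_nonneg h0 hmpos.le)]
    exact div_le_div₀ zero_le_one h1 hδ hω
  have hg_int : Integrable g P :=
    Integrable.mono' (integrable_const (1/δ)) hg_meas.aestronglyMeasurable hg_bound
  have hgm : ((fun ω => m (Z ω)) * g) =ᵐ[P] f := by
    filter_upwards [hae] with ω hω
    have hne : m (Z ω) ≠ 0 := (lt_of_lt_of_le hδ hω).ne'
    show m (Z ω) * (f ω / m (Z ω)) = f ω
    rw [mul_comm, div_mul_cancel₀ _ hne]
  constructor
  · -- forward direction
    intro h y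
    set k : Ω → ℝ := fun ω => (if Z ω ≤ y then (1:ℝ) else 0) / m (Z ω) with hkdef
    have hsy : MeasurableSet[G] {ω | Z ω ≤ y} := hZG measurableSet_Iic
    have hk_measG : Measurable[G] k :=
      (Measurable.ite hsy measurable_const measurable_const).div hmZG
    have hk_meas : Measurable[mΩ] k := hk_measG.mono hGle le_rfl
    have hk_bound : ∀ᵐ ω ∂P, ‖k ω‖ ≤ 1/δ := by
      filter_upwards [hae] with ω hω
      have hmpos : 0 < m (Z ω) := lt_of_lt_of_le hδ hω
      have h0 : 0 ≤ (if Z ω ≤ y then (1:ℝ) else 0) := by positivity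
      have h1 : (if Z ω ≤ y then (1:ℝ) else 0) ≤ 1 := by
        by_cases hzy : Z ω ≤ y <;> simp [hzy]
      rw [Real.norm_eq_abs, hkdef, abs_of_nonneg (div_nonneg h0 hmpos.le)]
      exact div_le_div₀ zero_le_one h1 hδ hω
    have hkf_int : Integrable (k * f) P := by
      refine Integrable.mono' (integrable_const (1/δ))
        ((hk_meas.mul hf_meas).aestronglyMeasurable) ?_
      filter_upwards [hk_bound] with ω hω
      calc ‖k ω * f ω‖ = ‖k ω‖ * ‖f ω‖ := norm_mul _ _
        _ ≤ (1/δ) * 1 := by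
            refine mul_le_mul hω (hf_norm ω) (norm_nonneg _) ?_
            positivity
        _ = 1/δ := mul_one _
    have hpull := condExp_mul_of_stronglyMeasurable_left hk_measG.stronglyMeasurable hkf_int hf_int
    have he1 : ∫ ω, (k * f) ω ∂P = ∫ ω, k ω * (P[f|G]) ω ∂P := by
      rw [← integral_condExp (μ := P) (f := k * f) hGle]
      exact integral_congr_ae hpull
    have he2 : (fun ω => k ω * (P[f|G]) ω) =ᵐ[P]
        (fun ω => if Z ω ≤ y then (1:ℝ) else 0) := by
      filter_upwards [h, hae] with ω hω hδω
      rw [← hω]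
      have hne : m (Z ω) ≠ 0 := (lt_of_lt_of_le hδ hδω).ne'
      show (if Z ω ≤ y then (1:ℝ) else 0) / m (Z ω) * m (Z ω) = _
      rw [div_mul_cancel₀ _ hne]
    have he3 : ∫ ω, (if Z ω ≤ y then (1:ℝ) else 0) ∂P = (P {ω | Z ω ≤ y}).toReal := by
      have hi : (fun ω => if Z ω ≤ y then (1:ℝ) else 0)
          = ({ω | Z ω ≤ y}).indicator (fun _ => (1:ℝ)) := by
        funext ω; simp [Set.indicator_apply]
      rw [hi]
      exact integral_indicator_one (μ := P) (hGle _ hsy)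
    have hi2 : (fun ω => (if Z ω ≤ y ∧ X ω = x then (1:ℝ) else 0) / m (Z ω)) = k * f := by
      funext ω
      show _ = k ω * f ω
      by_cases h1 : Z ω ≤ y <;> by_cases h2 : X ω = x <;>
        simp [hkdef, hfdef, h1, h2, zero_div]
    calc ∫ ω, (if Z ω ≤ y ∧ X ω = x then (1:ℝ) else 0) / m (Z ω) ∂P
        = ∫ ω, (k * f) ω ∂P := by rw [hi2]
      _ = ∫ ω, k ω * (P[f|G]) ω ∂P := he1
      _ = ∫ ω, (if Z ω ≤ y then (1:ℝ) else 0) ∂P := integral_congr_ae he2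
      _ = (P {ω | Z ω ≤ y}).toReal := he3
  · -- backward direction
    intro hy
    have hQbase : ∀ y : ℝ, ∫ ω in {ω | Z ω ≤ y}, g ω ∂P = (P {ω | Z ω ≤ y}).toReal := by
      intro y
      rw [← hy y, ← integral_indicator (μ := P) (s := {ω | Z ω ≤ y}) (hZ measurableSet_Iic)]
      congr 1
      funext ω
      by_cases h1 : Z ω ≤ y <;> by_cases h2 : X ω = x <;>
        simp [Set.indicator_apply, hgdef, hfdef, h1, h2, zero_div, Set.mem_setOf_eq]
    have hmono : Monotone (fun n : ℕ => Z ⁻¹' Iic (n:ℝ)) := by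
      intro a b hab
      exact preimage_mono (Iic_subset_Iic.mpr (by exact_mod_cast hab))
    have hunion : ⋃ n : ℕ, Z ⁻¹' Iic (n:ℝ) = univ := by
      ext ω
      simp only [mem_iUnion, mem_preimage, mem_Iic, mem_univ, iff_true]
      exact exists_nat_ge (Z ω)
    have htotal : ∫ ω, g ω ∂P = 1 := by
      have ht1 : Tendsto (fun n : ℕ => ∫ ω in Z ⁻¹' Iic (n:ℝ), g ω ∂P) atTop
          (𝓝 (∫ ω, g ω ∂P)) := by
        have h := tendsto_setIntegral_of_monotone (fun n : ℕ => hZ measurableSet_Iic) hmono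
          (by rw [hunion]; exact hg_int.integrableOn)
        rwa [hunion, setIntegral_univ] at h
      have ht2 : Tendsto (fun n : ℕ => (P (Z ⁻¹' Iic (n:ℝ))).toReal) atTop (𝓝 1) := by
        have h := tendsto_measure_iUnion_atTop (μ := P) hmono
        rw [hunion, measure_univ] at h
        have h2 := (ENNReal.tendsto_toReal (by norm_num : (1:ENNReal) ≠ ⊤)).comp h
        simpa [Function.comp_def] using h2
      have heq : (fun n : ℕ => ∫ ω in Z ⁻¹' Iic (n:ℝ), g ω ∂P)
          = fun n : ℕ => (P (Z ⁻¹' Iic (n:ℝ))).toReal := by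
        funext n; exact hQbase n
      rw [heq] at ht1
      exact tendsto_nhds_unique ht1 ht2
    have hC : IsPiSystem {s : Set Ω | ∃ t ∈ range (Iic : ℝ → Set ℝ), Z ⁻¹' t = s} :=
      isPiSystem_Iic.comap Z
    have hBorel : (inferInstance : MeasurableSpace ℝ)
        = MeasurableSpace.generateFrom (range (Iic : ℝ → Set ℝ)) := by
      rw [BorelSpace.measurable_eq (α := ℝ), borel_eq_generateFrom_Iic ℝ]
    have hGgen : G = MeasurableSpace.generateFrom
        {s : Set Ω | ∃ t ∈ range (Iic : ℝ → Set ℝ), Z ⁻¹' t = s} := by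
      rw [hGeq, hBorel, MeasurableSpace.comap_generateFrom]
      rfl
    have hQ : ∀ t, MeasurableSet[G] t → ∫ ω in t, g ω ∂P = (P t).toReal := by
      refine fun t ht => MeasurableSpace.induction_on_inter
        (m := G) (C := fun t _ => ∫ ω in t, g ω ∂P = (P t).toReal) hGgen hC ?_ ?_ ?_ ?_ t ht
      · simp
      · rintro _ ⟨t', ⟨y, rfl⟩, rfl⟩
        exact hQbase y
      · intro t htG hQt
        have ht' : MeasurableSet[mΩ] t := hGle _ htG
        rw [setIntegral_compl ht' hg_int, htotal, hQt, prob_compl_eq_one_sub ht',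
          ENNReal.toReal_sub_of_le prob_le_one ENNReal.one_ne_top, ENNReal.toReal_one]
      · intro s hd hmeasG hQs
        have hsmeas : ∀ i, MeasurableSet[mΩ] (s i) := fun i => hGle _ (hmeasG i)
        rw [integral_iUnion hsmeas hd hg_int.integrableOn, measure_iUnion hd hsmeas,
          ENNReal.tsum_toReal_eq (fun i => measure_ne_top P _)]
        exact tsum_congr hQs
    have hone : (fun _ : Ω => (1:ℝ)) =ᵐ[P] P[g|G] := by
      refine ae_eq_condExp_of_forall_setIntegral_eq hGle hg_int
        (fun s hs hμ => (integrable_const 1).integrableOn) (fun s hs hμ => ?_)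
        (StronglyMeasurable.aestronglyMeasurable stronglyMeasurable_const)
      rw [setIntegral_const, smul_eq_mul, mul_one]
      exact (hQ s hs).symm
    have hmg_int : Integrable ((fun ω => m (Z ω)) * g) P := hf_int.congr hgm.symm
    have hpull := condExp_mul_of_stronglyMeasurable_left hmZG.stronglyMeasurable hmg_int hg_int
    have hc1 : P[f|G] =ᵐ[P] P[(fun ω => m (Z ω)) * g|G] := condExp_congr_ae hgm.symm
    have hc2 : ((fun ω => m (Z ω)) * P[g|G]) =ᵐ[P] fun ω => m (Z ω) := by
      filter_upwards [hone] with ω hω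
      show m (Z ω) * (P[g|G]) ω = m (Z ω)
      rw [← hω, mul_one]
    exact (hc1.trans (hpull.trans hc2)).symm

/-- **Characterization of latent propensity scores (univariate version).**
Let `Z` be a real random variable, `X` a binary treatment, `x ∈ {0,1}`, and `m : ℝ → ℝ` Borel
measurable with `P(m(Z) ≥ δ) = 1` for some `δ > 0`. Then `m ∘ Z` is a version of
`E[1{X = x} ∣ σ(Z)]` if and only if for all `y`,
`E[1{Z ≤ y} · 1{X = x} / m(Z)] = P(Z ≤ y)`. -/
theorem latent_propensity_characterization_univariate
    {Ω : Type*} [MeasurableSpace Ω] (P : Measure Ω) [IsProbabilityMeasure P]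
    (Z : Ω → ℝ) (X : Ω → Bool) (hZ : Measurable Z) (hX : Measurable X)
    (x : Bool) (m : ℝ → ℝ) (hm : Measurable m)
    (δ : ℝ) (hδ : 0 < δ) (hmδ : P {ω | δ ≤ m (Z ω)} = 1) :
    ((fun ω => m (Z ω)) =ᵐ[P]
      P[(fun ω => if X ω = x then (1:ℝ) else 0) | MeasurableSpace.comap Z inferInstance])
    ↔
    (∀ y : ℝ,
      (∫ ω, (if Z ω ≤ y ∧ X ω = x then (1:ℝ) else 0) / m (Z ω) ∂P)
        = (P {ω | Z ω ≤ y}).toReal) := by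
  exact latent_propensity_aux P Z X hZ hX x m hm δ hδ hmδ _ rfl
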